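/- Let X be a locally compact complete separable metric space equipped with a Borel probability measure ν. Then for any Borel probability measure μ on X, H(μ|ν) = sup { ∫ φ dμ − log ∫ e^φ dν : φ ∈ C_b(X) }, where C_b(X) is the space of bounded continuous real functions on X. Moreover, the supremum is unchanged when restricted to those φ ∈ C_b(X) satisfying ∫ e^φ dν = 1. -/

import Mathlib

open MeasureTheory ProbabilityTheory Filter Set Classical
open scoped ENNReal NNReal Topology BigOperators

noncomputable section

/-- The uniform (rotation-invariant) probability measure on the sphere of radius `r`
in `ℝ^N`, realized as the pushforward of the standard Gaussian under radial projection. -/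
def uniformSphere (N : ℕ) (r : ℝ) : Measure (Fin N → ℝ) :=
  Measure.map (fun x => (r / Real.sqrt (∑ i, x i ^ 2)) • x)
    (Measure.pi fun _ : Fin N => gaussianReal 0 1)

/-- `σ^N`, the uniform probability measure on `S^{N-1}(√N)`. -/
def sigmaN (N : ℕ) : Measure (Fin N → ℝ) := uniformSphere N (Real.sqrt N)

/-- `Z_N(f,r) = ∫_{S^{N-1}(r)} f^{⊗N} dσ^N_r`. -/
def ZN (N : ℕ) (f : ℝ → ℝ) (r : ℝ) : ℝ :=
  ∫ v, (∏ i, f (v i)) ∂(uniformSphere N r)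

/-- Relative entropy `H(μ|ν)`, valued in `ℝ≥0∞`. -/
def relEntropy {α : Type*} [MeasurableSpace α] (μ ν : Measure α) : ℝ≥0∞ :=
  if μ ≪ ν ∧ Integrable (fun x => Real.log (μ.rnDeriv ν x).toReal) μ then
    ENNReal.ofReal (∫ x, Real.log (μ.rnDeriv ν x).toReal ∂μ)
  else ⊤

/-- The measure `f(v) dv` on `ℝ`. -/
def densityMeasure (f : ℝ → ℝ) : Measure ℝ :=
  volume.withDensity fun v => ENNReal.ofReal (f v)

/-- The conditioned product measure `[μ^{⊗N}]_{S^{N-1}(√N)}`. -/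
def condProd (f : ℝ → ℝ) (N : ℕ) : Measure (Fin N → ℝ) :=
  (sigmaN N).withDensity fun v =>
    ENNReal.ofReal ((∏ i, f (v i)) / ZN N f (Real.sqrt N))

/-- Projection to the first `k` coordinates (junk value `0` if `N < k`). -/
def projFun (N k : ℕ) (v : Fin N → ℝ) : Fin k → ℝ :=
  fun i => if h : (i : ℕ) < N then v ⟨i, h⟩ else 0

/-- `P_k μ`, the marginal on the first `k` coordinates. -/
def marginal (N k : ℕ) (μ : Measure (Fin N → ℝ)) : Measure (Fin k → ℝ) :=
  Measure.map (projFun N k) μ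

/-- The rotation `R_{i,j,θ}` in the `(v_i,v_j)`-plane. -/
def kacRot (N : ℕ) (i j : Fin N) (θ : ℝ) (v : Fin N → ℝ) : Fin N → ℝ :=
  Function.update (Function.update v i (Real.cos θ * v i - Real.sin θ * v j)) j
    (Real.sin θ * v i + Real.cos θ * v j)

/-- The Kac transition operator `Q_N`. -/
def kacQ (N : ℕ) (φ : (Fin N → ℝ) → ℝ) (v : Fin N → ℝ) : ℝ :=
  ((N : ℝ) * ((N : ℝ) - 1) / 2)⁻¹ *
    ∑ p ∈ Finset.univ.filter (fun p : Fin N × Fin N => p.1 < p.2),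
      (1 / (2 * Real.pi)) * ∫ θ in (0:ℝ)..(2 * Real.pi), φ (kacRot N p.1 p.2 θ v)

/-- The Kac generator `L_N = N (Q_N - I)`. -/
def kacL (N : ℕ) (φ : (Fin N → ℝ) → ℝ) (v : Fin N → ℝ) : ℝ :=
  (N : ℝ) * (kacQ N φ v - φ v)

/-- The standard Gaussian density `γ` on `ℝ`. -/
def gaussDens (v : ℝ) : ℝ := Real.exp (-(v ^ 2) / 2) / Real.sqrt (2 * Real.pi)

/-- The Maxwellian density `M_a` of variance `a`. -/
def maxwellian (a : ℝ) (v : ℝ) : ℝ :=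
  Real.exp (-(v ^ 2) / (2 * a)) / Real.sqrt (2 * Real.pi * a)

/-- The Wild convolution `f ∘ g`. -/
def wild (f g : ℝ → ℝ) (v : ℝ) : ℝ :=
  (1 / (2 * Real.pi)) *
    ∫ vs : ℝ, ∫ θ in (0:ℝ)..(2 * Real.pi),
      f (v * Real.cos θ - vs * Real.sin θ) * g (v * Real.sin θ + vs * Real.cos θ)

/-- `α_N(u) = u^{N/2-1} e^{-u/2}`. -/
def alphaN (N : ℕ) (u : ℝ) : ℝ := u ^ ((N : ℝ) / 2 - 1) * Real.exp (-u / 2)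

/-- `γ^{(N)}(r) = e^{-r²/2}/(2π)^{N/2}`. -/
def gammaDensN (N : ℕ) (r : ℝ) : ℝ :=
  Real.exp (-(r ^ 2) / 2) / (2 * Real.pi) ^ ((N : ℝ) / 2)

/-- `Z'_N(f,r) = ∫_{S^{N-1}(r)} (f/γ)^{⊗N} dσ^N_r`. -/
def ZN' (N : ℕ) (f : ℝ → ℝ) (r : ℝ) : ℝ :=
  ∫ v, (∏ i, f (v i) / gaussDens (v i)) ∂(uniformSphere N r)


section DVNamespace
open Real

namespace DV

variable {α : Type*} [MeasurableSpace α] {μ ν : Measure α}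

/-- elementary: |exp a - exp b| ≤ exp c * |a - b| if a,b ≤ c -/
lemma abs_exp_sub_exp_le {a b c : ℝ} (ha : a ≤ c) (hb : b ≤ c) :
    |Real.exp a - Real.exp b| ≤ Real.exp c * |a - b| := by
  wlog h : b ≤ a generalizing a b
  · rw [abs_sub_comm, abs_sub_comm a b]; exact this hb ha (le_of_not_ge h)
  rw [abs_of_nonneg (sub_nonneg.2 (exp_le_exp.2 h)), abs_of_nonneg (sub_nonneg.2 h)]
  have key : Real.exp a - Real.exp b ≤ Real.exp a * (a - b) := by
    have h1 : 1 - (a - b) ≤ Real.exp (b - a) := by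
      have := Real.add_one_le_exp (b - a); linarith
    have h2 : Real.exp a * (1 - (a-b)) ≤ Real.exp a * Real.exp (b-a) :=
      mul_le_mul_of_nonneg_left h1 (exp_pos a).le
    rw [← Real.exp_add] at h2
    simp only [add_sub_cancel] at h2
    nlinarith [exp_pos a]
  calc Real.exp a - Real.exp b ≤ Real.exp a * (a - b) := key
    _ ≤ Real.exp c * (a - b) := mul_le_mul_of_nonneg_right (exp_le_exp.2 ha) (by linarith)

/-- elementary: t * max (-log t) 0 ≤ exp (-1) for t ≥ 0 -/
lemma mul_neg_log_le {t : ℝ} (ht : 0 ≤ t) : t * max (-Real.log t) 0 ≤ Real.exp (-1) := by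
  rcases eq_or_lt_of_le ht with h | h
  · simp [← h, (exp_pos (-1)).le]
  rcases le_or_gt (-Real.log t) 0 with h0 | h0
  · rw [max_eq_right h0]; simp [(exp_pos (-1)).le]
  · rw [max_eq_left h0.le]
    set u := t⁻¹ with hu
    have hu0 : 0 < u := inv_pos.2 h
    have hlog : Real.log (u * Real.exp (-1)) ≤ u * Real.exp (-1) - 1 :=
      Real.log_le_sub_one_of_pos (mul_pos hu0 (exp_pos _))
    rw [Real.log_mul hu0.ne' (exp_pos _).ne', Real.log_exp] at hlog
    have hlogu : Real.log u = -Real.log t := by rw [hu, Real.log_inv]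
    have : -Real.log t ≤ u * Real.exp (-1) := by rw [← hlogu]; linarith
    calc t * (-Real.log t) ≤ t * (u * Real.exp (-1)) :=
          mul_le_mul_of_nonneg_left this ht
      _ = (t * t⁻¹) * Real.exp (-1) := by ring
      _ ≤ 1 * Real.exp (-1) := by rw [mul_inv_cancel₀ h.ne']
      _ = Real.exp (-1) := one_mul _

/-- clamp is 1-Lipschitz w.r.t. points in the interval -/
lemma abs_clamp_sub_le {a b M : ℝ} (h1 : -M ≤ b) (h2 : b ≤ M) :
    |max (min a M) (-M) - b| ≤ |a - b| := by
  have hM : -M ≤ M := le_trans h1 h2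
  rcases le_total a (-M) with h | h
  · rw [min_eq_left (le_trans h hM), max_eq_right h]
    rw [abs_of_nonpos (by linarith), abs_of_nonpos (by linarith)]; linarith
  rcases le_total M a with h' | h'
  · rw [min_eq_right h', max_eq_left hM]
    rw [abs_of_nonneg (by linarith), abs_of_nonneg (by linarith)]; linarith
  · rw [min_eq_left h', max_eq_left h]

lemma integrable_of_bounded [IsFiniteMeasure μ] {f : α → ℝ} (hf : AEStronglyMeasurable f μ)
    {M : ℝ} (hM : ∀ x, |f x| ≤ M) : Integrable f μ :=
  Integrable.mono' (integrable_const M) hf (ae_of_all _ fun x => by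
    simpa using hM x)

/-- Gibbs' inequality. -/
lemma gibbs [IsProbabilityMeasure μ] [IsProbabilityMeasure ν]
    (hac : μ ≪ ν) (hint : Integrable (llr μ ν) μ) : 0 ≤ ∫ x, llr μ ν x ∂μ := by
  have hexp : Integrable (fun x => Real.exp (-llr μ ν x)) μ := by
    rw [integrable_congr (exp_neg_llr hac)]
    exact Measure.integrable_toReal_rnDeriv
  have hjen : Real.exp (∫ x, -llr μ ν x ∂μ) ≤ ∫ x, Real.exp (-llr μ ν x) ∂μ := by
    refine ConvexOn.map_integral_le convexOn_exp Real.continuous_exp.continuousOn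
      isClosed_univ (ae_of_all _ fun x => mem_univ _) hint.neg ?_
    exact hexp
  have h2 : ∫ x, Real.exp (-llr μ ν x) ∂μ = ∫ x, (ν.rnDeriv μ x).toReal ∂μ :=
    integral_congr_ae (exp_neg_llr hac)
  have h3 : ∫ x, (ν.rnDeriv μ x).toReal ∂μ ≤ (ν Set.univ).toReal := by
    rw [Measure.integral_toReal_rnDeriv']
    have : (0:ℝ) ≤ (ν.singularPart μ Set.univ).toReal := ENNReal.toReal_nonneg
    simp only [measureReal_def] at this ⊢
    linarith
  rw [integral_neg] at hjen
  have hle : Real.exp (-∫ x, llr μ ν x ∂μ) ≤ 1 := by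
    simp only [measure_univ, ENNReal.toReal_one] at h3
    linarith
  have := Real.exp_le_one_iff.mp hle
  linarith


/-- Donsker–Varadhan upper bound. -/
lemma dv_upper [IsProbabilityMeasure μ] [IsProbabilityMeasure ν]
    (hac : μ ≪ ν) (hint : Integrable (llr μ ν) μ) {φ : α → ℝ}
    (hφμ : Integrable φ μ) (hφν : Integrable (fun x => Real.exp (φ x)) ν) :
    ∫ x, φ x ∂μ - Real.log (∫ x, Real.exp (φ x) ∂ν) ≤ ∫ x, llr μ ν x ∂μ := by
  have hν0 : NeZero ν := ⟨IsProbabilityMeasure.ne_zero ν⟩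
  have htp : IsProbabilityMeasure (ν.tilted φ) := isProbabilityMeasure_tilted hφν
  have hac' : μ ≪ ν.tilted φ := hac.trans (absolutelyContinuous_tilted hφν)
  have hint' : Integrable (llr μ (ν.tilted φ)) μ :=
    integrable_llr_tilted_right hac hφμ hint hφν
  have hg : 0 ≤ ∫ x, llr μ (ν.tilted φ) x ∂μ := gibbs hac' hint'
  rw [integral_llr_tilted_right hac hφμ hφν hint] at hg
  linarith

/-- lintegral bound on the negative part of llr -/
lemma lintegral_neg_llr_le [IsProbabilityMeasure μ] [IsProbabilityMeasure ν]
    (hac : μ ≪ ν) :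
    ∫⁻ x, ENNReal.ofReal (max (-llr μ ν x) 0) ∂μ ≤ ENNReal.ofReal (Real.exp (-1)) := by
  have hm : Measurable (fun x => max (-llr μ ν x) 0) :=
    (measurable_llr μ ν).neg.max measurable_const
  rw [← lintegral_rnDeriv_mul hac hm.ennreal_ofReal.aemeasurable]
  have hbound : ∀ x, (μ.rnDeriv ν x * ENNReal.ofReal (max (-llr μ ν x) 0))
      ≤ ENNReal.ofReal (Real.exp (-1)) := by
    intro x
    rcases eq_or_ne (μ.rnDeriv ν x) ∞ with h | h
    · simp only [llr, h, ENNReal.toReal_top, Real.log_zero, neg_zero, max_self,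
        ENNReal.ofReal_zero, mul_zero]
      exact zero_le
    · rw [← ENNReal.ofReal_toReal h, ← ENNReal.ofReal_mul ENNReal.toReal_nonneg]
      exact ENNReal.ofReal_le_ofReal (mul_neg_log_le ENNReal.toReal_nonneg)
  calc ∫⁻ x, (μ.rnDeriv ν x * ENNReal.ofReal (max (-llr μ ν x) 0)) ∂ν
      ≤ ∫⁻ _, ENNReal.ofReal (Real.exp (-1)) ∂ν := lintegral_mono hbound
    _ = ENNReal.ofReal (Real.exp (-1)) := by simp

/-- negative part of llr is integrable -/
lemma integrable_neg_llr [IsProbabilityMeasure μ] [IsProbabilityMeasure ν]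
    (hac : μ ≪ ν) : Integrable (fun x => max (-llr μ ν x) 0) μ := by
  have hm : Measurable (fun x => max (-llr μ ν x) 0) :=
    (measurable_llr μ ν).neg.max measurable_const
  refine ⟨hm.aestronglyMeasurable, ?_⟩
  rw [hasFiniteIntegral_iff_norm]
  have hrw : ∀ x, ENNReal.ofReal ‖max (-llr μ ν x) 0‖ = ENNReal.ofReal (max (-llr μ ν x) 0) := by
    intro x; rw [Real.norm_eq_abs, abs_of_nonneg (le_max_right _ _)]
  simp only [hrw]
  exact lt_of_le_of_lt (lintegral_neg_llr_le hac) ENNReal.ofReal_lt_top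

/-- integral bound on the negative part of llr -/
lemma integral_neg_llr_le [IsProbabilityMeasure μ] [IsProbabilityMeasure ν]
    (hac : μ ≪ ν) : ∫ x, max (-llr μ ν x) 0 ∂μ ≤ Real.exp (-1) := by
  have hm : Measurable (fun x => max (-llr μ ν x) 0) :=
    (measurable_llr μ ν).neg.max measurable_const
  have heq : ∫ x, max (-llr μ ν x) 0 ∂μ =
      (∫⁻ x, ENNReal.ofReal (max (-llr μ ν x) 0) ∂μ).toReal :=
    integral_eq_lintegral_of_nonneg_ae (f := fun x => max (-llr μ ν x) 0)
      (ae_of_all _ fun x => le_max_right _ _) hm.aestronglyMeasurable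
  rw [heq]
  have h1 := ENNReal.toReal_le_toReal
    (ne_top_of_le_ne_top ENNReal.ofReal_ne_top (lintegral_neg_llr_le hac))
    (ENNReal.ofReal_ne_top (r := Real.exp (-1))) |>.2 (lintegral_neg_llr_le hac)
  rwa [ENNReal.toReal_ofReal (Real.exp_pos _).le] at h1


section Approx

variable {X : Type*} [MetricSpace X] [MeasurableSpace X] [BorelSpace X]

lemma approx (μ ν : Measure X) [IsProbabilityMeasure μ] [IsProbabilityMeasure ν]
    {φ : X → ℝ} (hφ : Measurable φ) {M : ℝ} (hM : ∀ x, |φ x| ≤ M) {ε : ℝ} (hε : 0 < ε) :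
    ∃ g : BoundedContinuousFunction X ℝ,
      ∫ x, φ x ∂μ - Real.log (∫ x, Real.exp (φ x) ∂ν) - ε ≤
        ∫ x, g x ∂μ - Real.log (∫ x, Real.exp (g x) ∂ν) := by
  have hX : Nonempty X := by
    rcases isEmpty_or_nonempty X with h | h
    · exfalso
      have h1 : μ Set.univ = 1 := measure_univ
      rw [Set.univ_eq_empty_iff.2 h, measure_empty] at h1
      simp at h1
    · exact h
  obtain ⟨x₀⟩ := hX
  have hM0 : 0 ≤ M := le_trans (abs_nonneg _) (hM x₀)
  set δ : ℝ := ε / (1 + Real.exp (2 * M)) with hδdef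
  have hδ : 0 < δ := div_pos hε (by positivity)
  have hφint : Integrable φ (μ + ν) := integrable_of_bounded hφ.aestronglyMeasurable hM
  obtain ⟨g₀, hg₀, -⟩ := hφint.exists_boundedContinuous_integral_sub_le hδ
  set gf : X → ℝ := fun x => max (min (g₀ x) M) (-M) with hgf
  have hgc : Continuous gf := (g₀.continuous.min continuous_const).max continuous_const
  have hgb : ∀ x, |gf x| ≤ M := by
    intro x
    rw [abs_le]
    exact ⟨le_max_right _ _, max_le (min_le_right _ _) (by linarith)⟩
  refine ⟨BoundedContinuousFunction.ofNormedAddCommGroup gf hgc M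
    (fun x => by rw [Real.norm_eq_abs]; exact hgb x), ?_⟩
  simp only [BoundedContinuousFunction.coe_ofNormedAddCommGroup]
  -- basic integrabilities
  have hgm : Measurable gf := hgc.measurable
  have hφμ : Integrable φ μ := integrable_of_bounded hφ.aestronglyMeasurable hM
  have hgμ : Integrable gf μ := integrable_of_bounded hgm.aestronglyMeasurable hgb
  have hgν : Integrable gf ν := integrable_of_bounded hgm.aestronglyMeasurable hgb
  have hexpφ : Integrable (fun x => Real.exp (φ x)) ν :=
    integrable_of_bounded (hφ.exp.aestronglyMeasurable)
      (fun x => by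
        rw [abs_of_nonneg (Real.exp_pos _).le]
        exact Real.exp_le_exp.2 (le_trans (le_abs_self _) (hM x)))
  have hexpg : Integrable (fun x => Real.exp (gf x)) ν :=
    integrable_of_bounded (hgm.exp.aestronglyMeasurable)
      (fun x => by
        rw [abs_of_nonneg (Real.exp_pos _).le]
        exact Real.exp_le_exp.2 (le_trans (le_abs_self _) (hgb x)))
  -- the clamp is closer to φ than g₀
  have hclamp : ∀ x, |gf x - φ x| ≤ |φ x - g₀ x| := by
    intro x
    rw [abs_sub_comm (φ x) (g₀ x)]
    exact abs_clamp_sub_le (neg_le_of_abs_le (hM x)) (le_of_abs_le (hM x))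
  -- L¹ distances
  have habsint : Integrable (fun x => ‖φ x - g₀ x‖) (μ + ν) :=
    (hφint.sub (g₀.integrable _)).norm
  have hsum : ∫ x, ‖φ x - g₀ x‖ ∂μ + ∫ x, ‖φ x - g₀ x‖ ∂ν = ∫ x, ‖φ x - g₀ x‖ ∂(μ + ν) :=
    (integral_add_measure ((integrable_add_measure.1 habsint).1)
      ((integrable_add_measure.1 habsint).2)).symm
  have hL1μ : ∫ x, ‖φ x - g₀ x‖ ∂μ ≤ δ := by
    have h2 : 0 ≤ ∫ x, ‖φ x - g₀ x‖ ∂ν := integral_nonneg fun x => norm_nonneg _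
    linarith
  have hL1ν : ∫ x, ‖φ x - g₀ x‖ ∂ν ≤ δ := by
    have h2 : 0 ≤ ∫ x, ‖φ x - g₀ x‖ ∂μ := integral_nonneg fun x => norm_nonneg _
    linarith
  have hdiffμint : Integrable (fun x => |gf x - φ x|) μ := (hgμ.sub hφμ).abs
  have hgfφμ : ∫ x, |gf x - φ x| ∂μ ≤ δ := by
    refine le_trans (integral_mono hdiffμint
      ((integrable_add_measure.1 habsint).1) fun x => hclamp x) hL1μ
  have hφν : Integrable φ ν := integrable_of_bounded hφ.aestronglyMeasurable hM
  have hdiffνint : Integrable (fun x => |gf x - φ x|) ν := (hgν.sub hφν).abs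
  have hgfφν : ∫ x, |gf x - φ x| ∂ν ≤ δ :=
    le_trans (integral_mono hdiffνint
      ((integrable_add_measure.1 habsint).2) fun x => hclamp x) hL1ν
  -- first integral
  have hμclose : ∫ x, φ x ∂μ - δ ≤ ∫ x, gf x ∂μ := by
    have h1 : |∫ x, gf x ∂μ - ∫ x, φ x ∂μ| ≤ δ := by
      rw [← integral_sub hgμ hφμ]
      exact le_trans (by simpa [Real.norm_eq_abs] using
        norm_integral_le_integral_norm (μ := μ) (fun x => gf x - φ x)) hgfφμ
    have := (abs_le.1 h1).1
    linarith
  -- exponential integrals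
  set A := ∫ x, Real.exp (φ x) ∂ν with hA
  set B := ∫ x, Real.exp (gf x) ∂ν with hB
  have hApos : Real.exp (-M) ≤ A := by
    have h1 : ∫ _ : X, Real.exp (-M) ∂ν ≤ A :=
      integral_mono (integrable_const _) hexpφ
        (fun x => Real.exp_le_exp.2 (neg_le_of_abs_le (hM x)))
    simpa using h1
  have hBpos : Real.exp (-M) ≤ B := by
    have h1 : ∫ _ : X, Real.exp (-M) ∂ν ≤ B :=
      integral_mono (integrable_const _) hexpg
        (fun x => Real.exp_le_exp.2 (neg_le_of_abs_le (hgb x)))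
    simpa using h1
  have h0A : 0 < A := lt_of_lt_of_le (Real.exp_pos _) hApos
  have h0B : 0 < B := lt_of_lt_of_le (Real.exp_pos _) hBpos
  have h1 : |B - A| ≤ Real.exp M * δ := by
    rw [hB, hA, ← integral_sub hexpg hexpφ]
    calc |∫ x, (Real.exp (gf x) - Real.exp (φ x)) ∂ν|
        ≤ ∫ x, |Real.exp (gf x) - Real.exp (φ x)| ∂ν := by
          simpa [Real.norm_eq_abs] using
            norm_integral_le_integral_norm (μ := ν)
              (fun x => Real.exp (gf x) - Real.exp (φ x))
      _ ≤ ∫ x, Real.exp M * |gf x - φ x| ∂ν :=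
          integral_mono ((hexpg.sub hexpφ).abs) (hdiffνint.const_mul _)
            (fun x => abs_exp_sub_exp_le (le_of_abs_le (hgb x)) (le_of_abs_le (hM x)))
      _ = Real.exp M * ∫ x, |gf x - φ x| ∂ν := integral_const_mul _ _
      _ ≤ Real.exp M * δ := mul_le_mul_of_nonneg_left hgfφν (Real.exp_pos M).le
  have hexpMM : Real.exp (-M) * Real.exp M = 1 := by
    rw [← Real.exp_add]; simp
  have hexp2M : Real.exp (2 * M) = Real.exp M * Real.exp M := by
    rw [← Real.exp_add]; ring_nf
  have hlog : Real.log B ≤ Real.log A + Real.exp (2 * M) * δ := by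
    have hdiv : Real.log B - Real.log A = Real.log (B / A) :=
      (Real.log_div h0B.ne' h0A.ne').symm
    have h2 : Real.log (B / A) ≤ B / A - 1 :=
      Real.log_le_sub_one_of_pos (div_pos h0B h0A)
    have h3 : B / A - 1 = (B - A) / A := by field_simp
    have h1b : B - A ≤ Real.exp M * δ := (abs_le.1 h1).2
    have h4 : (B - A) / A ≤ Real.exp (2 * M) * δ := by
      rw [div_le_iff₀ h0A, hexp2M]
      have hA1 : 1 ≤ Real.exp M * A := by nlinarith [Real.exp_pos M]
      nlinarith [mul_le_mul_of_nonneg_left hA1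
        (mul_nonneg (Real.exp_pos M).le hδ.le)]
    linarith
  have hεδ : δ + Real.exp (2 * M) * δ = ε := by
    rw [hδdef]; field_simp
  linarith


lemma abs_clamp_le' {a n : ℝ} (hn : 0 ≤ n) : |max (min a n) (-n)| ≤ |a| := by
  rcases le_total a 0 with h | h
  · rw [min_eq_left (le_trans h hn)]
    rcases le_total a (-n) with h' | h'
    · rw [max_eq_right h', abs_of_nonpos (neg_nonpos.2 hn), abs_of_nonpos h]
      linarith
    · rw [max_eq_left h']
  · have h1 : (0:ℝ) ≤ min a n := le_min h hn
    rw [max_eq_left (le_trans (neg_nonpos.2 hn) h1), abs_of_nonneg h1, abs_of_nonneg h]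
    exact min_le_left _ _

lemma caseA (μ ν : Measure X) [IsProbabilityMeasure μ] [IsProbabilityMeasure ν]
    (hac : μ ≪ ν) (hint : Integrable (llr μ ν) μ) {ε : ℝ} (hε : 0 < ε) :
    ∃ g : BoundedContinuousFunction X ℝ,
      ∫ x, llr μ ν x ∂μ - ε ≤ ∫ x, g x ∂μ - Real.log (∫ x, Real.exp (g x) ∂ν) := by
  set f : X → ℝ := fun x => (μ.rnDeriv ν x).toReal with hf
  have hfm : Measurable f := (Measure.measurable_rnDeriv μ ν).ennreal_toReal
  have hf0 : ∀ x, 0 ≤ f x := fun x => ENNReal.toReal_nonneg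
  set φ : ℕ → X → ℝ :=
    fun n x => if f x = 0 then -(n:ℝ) else max (min (llr μ ν x) n) (-(n:ℝ)) with hφdef
  have hφm : ∀ n, Measurable (φ n) := fun n =>
    Measurable.ite (hfm (measurableSet_singleton 0)) measurable_const
      (((measurable_llr μ ν).min measurable_const).max measurable_const)
  have hφb : ∀ n x, |φ n x| ≤ (n : ℝ) := by
    intro n x
    by_cases h : f x = 0
    · simp [hφdef, h]
    · simp only [hφdef, if_neg h]
      rw [abs_le]
      refine ⟨le_max_right _ _, max_le (min_le_right _ _) ?_⟩
      have : (0:ℝ) ≤ n := Nat.cast_nonneg n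
      linarith
  have hfpos : ∀ᵐ x ∂μ, 0 < f x := by
    filter_upwards [Measure.rnDeriv_pos hac, hac.ae_le (Measure.rnDeriv_lt_top μ ν)]
      with x h1 h2
    exact ENNReal.toReal_pos h1.ne' h2.ne
  -- convergence of μ-integrals
  have h1 : Tendsto (fun n => ∫ x, φ n x ∂μ) atTop (𝓝 (∫ x, llr μ ν x ∂μ)) := by
    refine tendsto_integral_of_dominated_convergence (fun x => |llr μ ν x|)
      (fun n => (hφm n).aestronglyMeasurable) hint.abs ?_ ?_
    · intro n
      filter_upwards [hfpos] with x hx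
      rw [Real.norm_eq_abs]
      simp only [hφdef, if_neg hx.ne']
      exact abs_clamp_le' (Nat.cast_nonneg n)
    · filter_upwards [hfpos] with x hx
      refine Tendsto.congr' ?_ tendsto_const_nhds
      filter_upwards [eventually_ge_atTop ⌈|llr μ ν x|⌉₊] with n hn
      have hn' : |llr μ ν x| ≤ (n:ℝ) := le_trans (Nat.le_ceil _) (Nat.cast_le.2 hn)
      have hub : llr μ ν x ≤ (n:ℝ) := le_trans (le_abs_self _) hn'
      have hlb : -(n:ℝ) ≤ llr μ ν x := by
        have := neg_abs_le (llr μ ν x); linarith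
      simp only [hφdef, if_neg hx.ne', min_eq_left hub, max_eq_left hlb]
  -- convergence of ν-integrals of exponentials
  have hfint : Integrable f ν := Measure.integrable_toReal_rnDeriv
  have hfint1 : ∫ x, f x ∂ν = 1 := by
    rw [hf, Measure.integral_toReal_rnDeriv hac]; simp
  have h2 : Tendsto (fun n => ∫ x, Real.exp (φ n x) ∂ν) atTop (𝓝 1) := by
    rw [← hfint1]
    refine tendsto_integral_of_dominated_convergence (fun x => f x + 1)
      (fun n => ((hφm n).exp).aestronglyMeasurable) (hfint.add (integrable_const 1)) ?_ ?_
    · intro n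
      refine ae_of_all _ fun x => ?_
      rw [Real.norm_eq_abs, abs_of_nonneg (Real.exp_pos _).le]
      by_cases h : f x = 0
      · simp only [hφdef, h, if_pos]
        have : Real.exp (-(n:ℝ)) ≤ 1 :=
          Real.exp_le_one_iff.2 (by simp [Nat.cast_nonneg])
        linarith [hf0 x]
      · simp only [hφdef, if_neg h]
        have hfx : 0 < f x := lt_of_le_of_ne (hf0 x) (Ne.symm h)
        have hle : max (min (llr μ ν x) n) (-(n:ℝ)) ≤ max (llr μ ν x) 0 :=
          max_le_max (min_le_left _ _) (by simp [Nat.cast_nonneg])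
        calc Real.exp (max (min (llr μ ν x) n) (-(n:ℝ)))
            ≤ Real.exp (max (llr μ ν x) 0) := Real.exp_le_exp.2 hle
          _ = max (Real.exp (llr μ ν x)) 1 := by
              rcases le_total (llr μ ν x) 0 with h' | h'
              · rw [max_eq_right h', max_eq_right (Real.exp_le_one_iff.2 h'), Real.exp_zero]
              · rw [max_eq_left h', max_eq_left (Real.one_le_exp h')]
          _ = max (f x) 1 := by rw [llr, Real.exp_log hfx]
          _ ≤ f x + 1 := by
              rcases le_total (f x) 1 with h' | h'
              · rw [max_eq_right h']; linarith [hf0 x]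
              · rw [max_eq_left h']; linarith
    · refine ae_of_all _ fun x => ?_
      by_cases h : f x = 0
      · simp only [hφdef, h, if_pos]
        rw [← h]
        have hneg : Tendsto (fun n : ℕ => -(n:ℝ)) atTop atBot :=
          tendsto_neg_atBot_iff.2 tendsto_natCast_atTop_atTop
        rw [h]
        exact Real.tendsto_exp_atBot.comp hneg
      · have hfx : 0 < f x := lt_of_le_of_ne (hf0 x) (Ne.symm h)
        refine Tendsto.congr' ?_ tendsto_const_nhds
        filter_upwards [eventually_ge_atTop ⌈|llr μ ν x|⌉₊] with n hn
        have hn' : |llr μ ν x| ≤ (n:ℝ) := le_trans (Nat.le_ceil _) (Nat.cast_le.2 hn)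
        have hub : llr μ ν x ≤ (n:ℝ) := le_trans (le_abs_self _) hn'
        have hlb : -(n:ℝ) ≤ llr μ ν x := by
          have := neg_abs_le (llr μ ν x); linarith
        simp only [hφdef, if_neg h, min_eq_left hub, max_eq_left hlb]
        rw [llr, Real.exp_log hfx]
  have h3 : Tendsto (fun n => Real.log (∫ x, Real.exp (φ n x) ∂ν)) atTop (𝓝 0) := by
    have := ((Real.continuousAt_log one_ne_zero).tendsto).comp h2
    simpa [Function.comp_def] using this
  have h4 : Tendsto (fun n => ∫ x, φ n x ∂μ - Real.log (∫ x, Real.exp (φ n x) ∂ν))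
      atTop (𝓝 (∫ x, llr μ ν x ∂μ)) := by
    simpa using h1.sub h3
  have hev : ∀ᶠ n in atTop, ∫ x, llr μ ν x ∂μ - ε / 2 <
      ∫ x, φ n x ∂μ - Real.log (∫ x, Real.exp (φ n x) ∂ν) :=
    h4.eventually (eventually_gt_nhds (by linarith))
  obtain ⟨n, hn⟩ := hev.exists
  obtain ⟨g, hg⟩ := approx μ ν (hφm n) (hφb n) (half_pos hε)
  exact ⟨g, by linarith⟩

lemma caseB (μ ν : Measure X) [IsProbabilityMeasure μ] [IsProbabilityMeasure ν]
    (hac : μ ≪ ν) (hint : ¬ Integrable (llr μ ν) μ) (c : ℝ) :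
    ∃ g : BoundedContinuousFunction X ℝ,
      c ≤ ∫ x, g x ∂μ - Real.log (∫ x, Real.exp (g x) ∂ν) := by
  set f : X → ℝ := fun x => (μ.rnDeriv ν x).toReal with hf
  have hfm : Measurable f := (Measure.measurable_rnDeriv μ ν).ennreal_toReal
  have hf0 : ∀ x, 0 ≤ f x := fun x => ENNReal.toReal_nonneg
  set llrp : X → ℝ := fun x => max (llr μ ν x) 0 with hllrp
  set llrm : X → ℝ := fun x => max (-llr μ ν x) 0 with hllrm
  have hpm : Measurable llrp := (measurable_llr μ ν).max measurable_const
  have hmm : Measurable llrm := (measurable_llr μ ν).neg.max measurable_const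
  have hm_int : Integrable llrm μ := integrable_neg_llr hac
  have hm_le : ∫ x, llrm x ∂μ ≤ Real.exp (-1) := integral_neg_llr_le hac
  have hp_not : ¬ Integrable llrp μ := by
    intro hp
    refine hint ((hp.sub hm_int).congr (ae_of_all _ fun x => ?_))
    simp only [Pi.sub_apply, hllrp, hllrm]
    rcases le_total (llr μ ν x) 0 with h | h
    · rw [max_eq_right h, max_eq_left (by linarith)]; ring
    · rw [max_eq_left h, max_eq_right (by linarith)]; ring
  have lint_top : ∫⁻ x, ENNReal.ofReal (llrp x) ∂μ = ∞ := by
    by_contra hlt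
    refine hp_not ⟨hpm.aestronglyMeasurable, ?_⟩
    rw [hasFiniteIntegral_iff_norm]
    have : ∀ x, ENNReal.ofReal ‖llrp x‖ = ENNReal.ofReal (llrp x) := fun x => by
      rw [Real.norm_eq_abs, abs_of_nonneg (le_max_right _ _)]
    simp only [this]
    exact lt_top_iff_ne_top.2 hlt
  have hsup : (⨆ n : ℕ, ∫⁻ x, ENNReal.ofReal (min (llrp x) n) ∂μ) = ∞ := by
    rw [← lint_top, ← lintegral_iSup
      (fun n => (hpm.min measurable_const).ennreal_ofReal)
      (fun i j hij => fun x =>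
        ENNReal.ofReal_le_ofReal (min_le_min le_rfl (Nat.cast_le.2 hij)))]
    refine lintegral_congr fun x => ?_
    refine le_antisymm (iSup_le fun n => ENNReal.ofReal_le_ofReal (min_le_left _ _)) ?_
    refine le_iSup_of_le ⌈llrp x⌉₊ (le_of_eq ?_)
    rw [min_eq_left (Nat.le_ceil _)]
  set c' : ℝ := max (c + Real.exp (-1) + 3) 0 with hc'
  obtain ⟨n, hn⟩ : ∃ n : ℕ, ENNReal.ofReal c' < ∫⁻ x, ENNReal.ofReal (min (llrp x) n) ∂μ := by
    have : ENNReal.ofReal c' < ⨆ n : ℕ, ∫⁻ x, ENNReal.ofReal (min (llrp x) n) ∂μ := by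
      rw [hsup]; exact ENNReal.ofReal_lt_top
    exact lt_iSup_iff.1 this
  have hrn_int : Integrable (fun x => min (llrp x) n) μ :=
    integrable_of_bounded (hpm.min measurable_const).aestronglyMeasurable
      (M := n) (fun x => by
        rw [abs_of_nonneg (le_min (le_max_right _ _) (Nat.cast_nonneg n))]
        exact min_le_right _ _)
  have hrn : c' ≤ ∫ x, min (llrp x) n ∂μ := by
    have heq : ∫ x, min (llrp x) n ∂μ =
        (∫⁻ x, ENNReal.ofReal (min (llrp x) n) ∂μ).toReal :=
      integral_eq_lintegral_of_nonneg_ae (f := fun x => min (llrp x) n)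
        (ae_of_all _ fun x => le_min (le_max_right _ _) (Nat.cast_nonneg n))
        (hpm.min measurable_const).aestronglyMeasurable
    rw [heq]
    have hfin : ∫⁻ x, ENNReal.ofReal (min (llrp x) n) ∂μ ≠ ∞ := by
      refine ne_top_of_le_ne_top (b := ENNReal.ofReal n * μ Set.univ) ?_ ?_
      · exact ENNReal.mul_ne_top ENNReal.ofReal_ne_top (measure_ne_top _ _)
      · rw [← lintegral_const]
        exact lintegral_mono fun x => ENNReal.ofReal_le_ofReal (min_le_right _ _)
    have := ENNReal.toReal_le_toReal ENNReal.ofReal_ne_top hfin |>.2 hn.le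
    rwa [ENNReal.toReal_ofReal (le_max_right _ _)] at this
  -- define the truncated function
  set φ : X → ℝ := fun x => if f x = 0 then -(n:ℝ) else max (min (llr μ ν x) n) (-(n:ℝ))
    with hφdef
  have hφm : Measurable φ :=
    Measurable.ite (hfm (measurableSet_singleton 0)) measurable_const
      (((measurable_llr μ ν).min measurable_const).max measurable_const)
  have hφb : ∀ x, |φ x| ≤ (n : ℝ) := by
    intro x
    by_cases h : f x = 0
    · simp [hφdef, h]
    · simp only [hφdef, if_neg h]
      rw [abs_le]
      refine ⟨le_max_right _ _, max_le (min_le_right _ _) ?_⟩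
      have : (0:ℝ) ≤ n := Nat.cast_nonneg n
      linarith
  have hφint : Integrable φ μ := integrable_of_bounded hφm.aestronglyMeasurable hφb
  have hfpos : ∀ᵐ x ∂μ, 0 < f x := by
    filter_upwards [Measure.rnDeriv_pos hac, hac.ae_le (Measure.rnDeriv_lt_top μ ν)]
      with x h1 h2
    exact ENNReal.toReal_pos h1.ne' h2.ne
  have hlow : ∀ᵐ x ∂μ, min (llrp x) n - llrm x ≤ φ x := by
    filter_upwards [hfpos] with x hx
    simp only [hφdef, if_neg hx.ne', hllrp, hllrm]
    rcases le_total (llr μ ν x) 0 with h | h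
    · rw [max_eq_right h, max_eq_left (by linarith)]
      have h1 : min (0:ℝ) n = 0 := min_eq_left (Nat.cast_nonneg n)
      rw [h1, min_eq_left (le_trans h (Nat.cast_nonneg n))]
      calc 0 - - llr μ ν x = llr μ ν x := by ring
        _ ≤ max (llr μ ν x) (-(n:ℝ)) := le_max_left _ _
    · rw [max_eq_left h, max_eq_right (by linarith)]
      have h1 : (0:ℝ) ≤ min (llr μ ν x) n := le_min h (Nat.cast_nonneg n)
      rw [sub_zero]
      exact le_max_left _ _
  have hφlow : c' - Real.exp (-1) ≤ ∫ x, φ x ∂μ := by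
    have h1 : ∫ x, (min (llrp x) n - llrm x) ∂μ ≤ ∫ x, φ x ∂μ :=
      integral_mono_ae (hrn_int.sub hm_int) hφint hlow
    rw [integral_sub hrn_int hm_int] at h1
    linarith
  -- bound on the exponential integral
  have hfint : Integrable f ν := Measure.integrable_toReal_rnDeriv
  have hexpφ : Integrable (fun x => Real.exp (φ x)) ν :=
    integrable_of_bounded (hφm.exp.aestronglyMeasurable)
      (fun x => by
        rw [abs_of_nonneg (Real.exp_pos _).le]
        exact Real.exp_le_exp.2 (le_trans (le_abs_self _) (hφb x)))
  have hexp_le : ∀ x, Real.exp (φ x) ≤ f x + 1 := by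
    intro x
    by_cases h : f x = 0
    · simp only [hφdef, h, if_pos]
      have : Real.exp (-(n:ℝ)) ≤ 1 :=
        Real.exp_le_one_iff.2 (by simp [Nat.cast_nonneg])
      linarith [hf0 x]
    · simp only [hφdef, if_neg h]
      have hfx : 0 < f x := lt_of_le_of_ne (hf0 x) (Ne.symm h)
      have hle : max (min (llr μ ν x) n) (-(n:ℝ)) ≤ max (llr μ ν x) 0 :=
        max_le_max (min_le_left _ _) (by simp [Nat.cast_nonneg])
      calc Real.exp (max (min (llr μ ν x) n) (-(n:ℝ)))
          ≤ Real.exp (max (llr μ ν x) 0) := Real.exp_le_exp.2 hle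
        _ = max (Real.exp (llr μ ν x)) 1 := by
            rcases le_total (llr μ ν x) 0 with h' | h'
            · rw [max_eq_right h', max_eq_right (Real.exp_le_one_iff.2 h'), Real.exp_zero]
            · rw [max_eq_left h', max_eq_left (Real.one_le_exp h')]
        _ = max (f x) 1 := by rw [llr, Real.exp_log hfx]
        _ ≤ f x + 1 := by
            rcases le_total (f x) 1 with h' | h'
            · rw [max_eq_right h']; linarith [hf0 x]
            · rw [max_eq_left h']; linarith
  have hBle : ∫ x, Real.exp (φ x) ∂ν ≤ 2 := by
    have h1 : ∫ x, Real.exp (φ x) ∂ν ≤ ∫ x, (f x + 1) ∂ν :=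
      integral_mono hexpφ (hfint.add (integrable_const 1)) hexp_le
    rw [integral_add hfint (integrable_const 1)] at h1
    have h2 : ∫ x, f x ∂ν ≤ 1 := by
      rw [hf, Measure.integral_toReal_rnDeriv hac]; simp
    simp only [integral_const, measure_univ, probReal_univ, ENNReal.toReal_one, smul_eq_mul, one_mul] at h1
    linarith
  have hBpos : 0 < ∫ x, Real.exp (φ x) ∂ν := integral_exp_pos hexpφ
  have hlogB : Real.log (∫ x, Real.exp (φ x) ∂ν) ≤ 1 := by
    have := Real.log_le_sub_one_of_pos hBpos
    linarith
  obtain ⟨g, hg⟩ := approx μ ν hφm hφb one_pos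
  refine ⟨g, ?_⟩
  have hc'ge : c + Real.exp (-1) + 3 ≤ c' := le_max_left _ _
  linarith

lemma caseC (μ ν : Measure X) [IsProbabilityMeasure μ] [IsProbabilityMeasure ν]
    (hac : ¬ μ ≪ ν) (c : ℝ) :
    ∃ g : BoundedContinuousFunction X ℝ,
      c ≤ ∫ x, g x ∂μ - Real.log (∫ x, Real.exp (g x) ∂ν) := by
  obtain ⟨s, hs1, hs2⟩ : ∃ s, ν s = 0 ∧ μ s ≠ 0 := by
    by_contra h
    push_neg at h
    exact hac (Measure.AbsolutelyContinuous.mk fun s _ hs => h s hs)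
  set t := toMeasurable ν s with ht
  have htm : MeasurableSet t := measurableSet_toMeasurable ν s
  have hνt : ν t = 0 := by rw [ht, measure_toMeasurable]; exact hs1
  have hμt : μ t ≠ 0 := fun h =>
    hs2 (le_antisymm (le_trans (measure_mono (subset_toMeasurable ν s)) h.le) zero_le)
  set m : ℝ := (μ t).toReal with hm
  have hm0 : 0 < m := ENNReal.toReal_pos hμt (measure_ne_top _ _)
  set n : ℕ := ⌈(c + 1) / m⌉₊ with hn
  have hnm : c + 1 ≤ (n:ℝ) * m := by
    have h1 : (c + 1) / m ≤ (n:ℝ) := Nat.le_ceil _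
    calc c + 1 = ((c + 1) / m) * m := by field_simp
      _ ≤ (n:ℝ) * m := mul_le_mul_of_nonneg_right h1 hm0.le
  set φ : X → ℝ := t.indicator (fun _ => (n:ℝ)) with hφdef
  have hφm : Measurable φ := measurable_const.indicator htm
  have hφb : ∀ x, |φ x| ≤ (n:ℝ) := by
    intro x
    rw [hφdef]
    by_cases h : x ∈ t
    · rw [Set.indicator_of_mem h, abs_of_nonneg (Nat.cast_nonneg n)]
    · rw [Set.indicator_of_notMem h]
      simp [Nat.cast_nonneg]
  have hφint : ∫ x, φ x ∂μ = (n:ℝ) * m := by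
    rw [hφdef, integral_indicator_const _ htm]
    simp [hm, mul_comm, measureReal_def]
  have hexpφ : ∫ x, Real.exp (φ x) ∂ν = 1 := by
    have heq : (fun x => Real.exp (φ x)) =
        fun x => t.indicator (fun _ => Real.exp n - 1) x + 1 := by
      funext x
      rw [hφdef]
      by_cases h : x ∈ t
      · rw [Set.indicator_of_mem h, Set.indicator_of_mem h]; ring
      · rw [Set.indicator_of_notMem h, Set.indicator_of_notMem h]; simp
    rw [heq, integral_add ?_ (integrable_const 1), integral_indicator_const _ htm]
    · simp [hνt, measureReal_def]
    · exact (integrable_const (Real.exp n - 1)).indicator htm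
  obtain ⟨g, hg⟩ := approx μ ν hφm hφb one_pos
  refine ⟨g, ?_⟩
  rw [hφint, hexpφ, Real.log_one] at hg
  linarith

lemma dv_sup (μ ν : Measure X) [IsProbabilityMeasure μ] [IsProbabilityMeasure ν] :
    (if μ ≪ ν ∧ Integrable (llr μ ν) μ
      then ENNReal.ofReal (∫ x, llr μ ν x ∂μ) else ⊤) =
    ⨆ φ : BoundedContinuousFunction X ℝ,
      ENNReal.ofReal (∫ x, φ x ∂μ - Real.log (∫ x, Real.exp (φ x) ∂ν)) := by
  by_cases h : μ ≪ ν ∧ Integrable (llr μ ν) μ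
  · rw [if_pos h]
    refine le_antisymm ?_ ?_
    · refine ENNReal.le_of_forall_pos_le_add fun ε hε _ => ?_
      obtain ⟨g, hg⟩ := caseA μ ν h.1 h.2 (by exact_mod_cast hε : (0:ℝ) < (ε:ℝ))
      calc ENNReal.ofReal (∫ x, llr μ ν x ∂μ)
          = ENNReal.ofReal ((∫ x, llr μ ν x ∂μ - ε) + ε) := by rw [sub_add_cancel]
        _ ≤ ENNReal.ofReal (∫ x, llr μ ν x ∂μ - ε) + ENNReal.ofReal ε :=
            ENNReal.ofReal_add_le
        _ ≤ (⨆ φ : BoundedContinuousFunction X ℝ,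
              ENNReal.ofReal (∫ x, φ x ∂μ - Real.log (∫ x, Real.exp (φ x) ∂ν))) +
            ENNReal.ofReal ε := by
            gcongr
            exact le_iSup_of_le g (ENNReal.ofReal_le_ofReal hg)
        _ = _ + (ε : ℝ≥0∞) := by rw [ENNReal.ofReal_coe_nnreal]
    · refine iSup_le fun g => ENNReal.ofReal_le_ofReal ?_
      refine dv_upper h.1 h.2 (g.integrable μ) ?_
      refine integrable_of_bounded (g.continuous.measurable.exp.aestronglyMeasurable)
        (M := Real.exp ‖g‖) fun x => ?_
      rw [abs_of_nonneg (Real.exp_pos _).le]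
      exact Real.exp_le_exp.2 (le_trans (le_abs_self _)
        (by simpa using g.norm_coe_le_norm x))
  · rw [if_neg h]
    have hall : ∀ c : ℝ, ∃ g : BoundedContinuousFunction X ℝ,
        c ≤ ∫ x, g x ∂μ - Real.log (∫ x, Real.exp (g x) ∂ν) := by
      intro c
      by_cases hac : μ ≪ ν
      · exact caseB μ ν hac (fun hint => h ⟨hac, hint⟩) c
      · exact caseC μ ν hac c
    symm
    refine ENNReal.eq_top_of_forall_nnreal_le fun r => ?_
    obtain ⟨g, hg⟩ := hall r
    calc (r : ℝ≥0∞) = ENNReal.ofReal (r : ℝ) := (ENNReal.ofReal_coe_nnreal (p := r)).symm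
      _ ≤ ENNReal.ofReal (∫ x, g x ∂μ - Real.log (∫ x, Real.exp (g x) ∂ν)) :=
          ENNReal.ofReal_le_ofReal hg
      _ ≤ _ := le_iSup_of_le g le_rfl

lemma dv_sup' (μ ν : Measure X) [IsProbabilityMeasure μ] [IsProbabilityMeasure ν] :
    (⨆ φ : BoundedContinuousFunction X ℝ,
      ENNReal.ofReal (∫ x, φ x ∂μ - Real.log (∫ x, Real.exp (φ x) ∂ν))) =
    ⨆ φ : {φ : BoundedContinuousFunction X ℝ // ∫ x, Real.exp (φ x) ∂ν = 1},
      ENNReal.ofReal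
        (∫ x, (φ : BoundedContinuousFunction X ℝ) x ∂μ -
          Real.log (∫ x, Real.exp ((φ : BoundedContinuousFunction X ℝ) x) ∂ν)) := by
  refine le_antisymm ?_ (iSup_le fun φ => le_iSup_of_le (φ : BoundedContinuousFunction X ℝ) le_rfl)
  refine iSup_le fun φ => ?_
  have hexpφ : Integrable (fun x => Real.exp (φ x)) ν := by
    refine integrable_of_bounded (φ.continuous.measurable.exp.aestronglyMeasurable)
      (M := Real.exp ‖φ‖) fun x => ?_
    rw [abs_of_nonneg (Real.exp_pos _).le]
    exact Real.exp_le_exp.2 (le_trans (le_abs_self _)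
      (by simpa using φ.norm_coe_le_norm x))
  set A := ∫ x, Real.exp (φ x) ∂ν with hA
  have hApos : 0 < A := integral_exp_pos hexpφ
  set ψ : BoundedContinuousFunction X ℝ :=
    φ - BoundedContinuousFunction.const X (Real.log A) with hψ
  have hψx : ∀ x, ψ x = φ x - Real.log A := fun x => by
    simp [hψ]
  have hψint : ∫ x, Real.exp (ψ x) ∂ν = 1 := by
    have : (fun x => Real.exp (ψ x)) = fun x => Real.exp (φ x) * Real.exp (-Real.log A) := by
      funext x
      rw [hψx x, Real.exp_sub, Real.exp_neg, div_eq_mul_inv]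
    rw [this, integral_mul_const, Real.exp_neg, Real.exp_log hApos, ← hA,
      mul_inv_cancel₀ hApos.ne']
  have hψμ : ∫ x, ψ x ∂μ = ∫ x, φ x ∂μ - Real.log A := by
    have : (fun x => ψ x) = fun x => φ x - Real.log A := funext hψx
    rw [this, integral_sub (φ.integrable μ) (integrable_const _)]
    simp
  refine le_trans (le_of_eq ?_)
    (le_iSup (fun φ : {φ : BoundedContinuousFunction X ℝ // ∫ x, Real.exp (φ x) ∂ν = 1} =>
      ENNReal.ofReal
        (∫ x, (φ : BoundedContinuousFunction X ℝ) x ∂μ -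
          Real.log (∫ x, Real.exp ((φ : BoundedContinuousFunction X ℝ) x) ∂ν)))
      ⟨ψ, hψint⟩)
  congr 1
  rw [hψμ, hψint, Real.log_one]
  ring

end Approx

end DV

end DVNamespace

/-- the Legendre (Donsker–Varadhan) representation of relative entropy. -/
theorem stmt12 (X : Type*) [MetricSpace X] [CompleteSpace X] [LocallyCompactSpace X]
    [TopologicalSpace.SeparableSpace X] [MeasurableSpace X] [BorelSpace X]
    (μ ν : Measure X) (hμ : IsProbabilityMeasure μ) (hν : IsProbabilityMeasure ν) :
    relEntropy μ ν =
      (⨆ φ : BoundedContinuousFunction X ℝ,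
        ENNReal.ofReal (∫ x, φ x ∂μ - Real.log (∫ x, Real.exp (φ x) ∂ν))) ∧
    relEntropy μ ν =
      (⨆ φ : {φ : BoundedContinuousFunction X ℝ // ∫ x, Real.exp (φ x) ∂ν = 1},
        ENNReal.ofReal
          (∫ x, (φ : BoundedContinuousFunction X ℝ) x ∂μ -
            Real.log (∫ x, Real.exp ((φ : BoundedContinuousFunction X ℝ) x) ∂ν))) := by
  have h1 : relEntropy μ ν =
      if μ ≪ ν ∧ Integrable (llr μ ν) μ then ENNReal.ofReal (∫ x, llr μ ν x ∂μ) else ⊤ := rfl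
  constructor
  · rw [h1, DV.dv_sup μ ν]
  · rw [h1, DV.dv_sup μ ν, DV.dv_sup' μ ν]

end
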